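/- Let ε > 0, p > 0 and set r = 1 + 2ε + 2p. There is a constant C such that for all α > 0 and all integers j ≥ 0, Σ_{i=1}^∞ (1/α²) i^{-2-4ε-2p}/(1 + (1/α) i^{-r})^{2j+2} ≤ C (1/(j+1))^{1 + 2ε/r} α^{-(1+2p)/r}. -/

import Mathlib

open Real

private lemma telescope_step_3dvar {δ k : ℝ} (hδ : 1 ≤ δ) (hk : 1 ≤ k) :
    δ * (k + 1) ^ (-(1 + δ)) ≤ k ^ (-δ) - (k + 1) ^ (-δ) := by
  have hk0 : (0:ℝ) < k := lt_of_lt_of_le one_pos hk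
  have hk1 : (0:ℝ) < k + 1 := by linarith
  have hber : 1 + δ * (1/k) ≤ (1 + 1/k) ^ δ :=
    one_add_mul_self_le_rpow_one_add (le_trans (by norm_num) (by positivity : (0:ℝ) ≤ 1/k)) hδ
  have hid : k ^ (-δ) = (k + 1) ^ (-δ) * (1 + 1/k) ^ δ := by
    have h1 : (1:ℝ) + 1/k = (k+1)/k := by field_simp
    rw [h1, Real.div_rpow (by linarith) hk0.le, Real.rpow_neg hk1.le, Real.rpow_neg hk0.le]
    field_simp
  have hkey : k ^ (-δ) - (k + 1) ^ (-δ) = (k + 1) ^ (-δ) * ((1 + 1/k) ^ δ - 1) := by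
    rw [mul_sub, mul_one, ← hid]
  rw [hkey]
  have h2 : (k+1) ^ (-(1+δ)) = (k+1) ^ (-δ) * (k+1)⁻¹ := by
    rw [show -(1+δ) = -δ + -1 by ring, Real.rpow_add hk1, Real.rpow_neg_one]
  rw [h2]
  have h3 : δ * (k+1)⁻¹ ≤ (1 + 1/k) ^ δ - 1 := by
    have : δ * (k+1)⁻¹ ≤ δ * (1/k) := by
      apply mul_le_mul_of_nonneg_left _ (by linarith)
      rw [one_div]
      exact inv_anti₀ hk0 (by linarith)
    linarith
  calc δ * ((k+1) ^ (-δ) * (k+1)⁻¹) = (k+1) ^ (-δ) * (δ * (k+1)⁻¹) := by ring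
    _ ≤ (k+1) ^ (-δ) * ((1 + 1/k) ^ δ - 1) := by
        apply mul_le_mul_of_nonneg_left h3 (Real.rpow_nonneg hk1.le _)

private lemma tail_sum_bound_3dvar {δ : ℝ} (hδ : 1 ≤ δ) {N : ℕ} (hN : 1 ≤ N) :
    ∑' m : ℕ, ((N:ℝ) + m + 1) ^ (-(1 + δ)) ≤ δ⁻¹ * (N:ℝ) ^ (-δ) := by
  have hδ0 : (0:ℝ) < δ := lt_of_lt_of_le one_pos hδ
  have hN0 : (0:ℝ) < N := by exact_mod_cast hN
  apply Real.tsum_le_of_sum_range_le (fun m => Real.rpow_nonneg (by positivity) _)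
  intro M
  have hstep : ∀ m ∈ Finset.range M, ((N:ℝ) + m + 1) ^ (-(1+δ)) ≤
      δ⁻¹ * (((N:ℝ) + m) ^ (-δ) - ((N:ℝ) + (m+1:ℕ)) ^ (-δ)) := by
    intro m _
    have hk : (1:ℝ) ≤ (N:ℝ) + m := by
      have : (0:ℝ) ≤ m := Nat.cast_nonneg m
      have h1 : (1:ℝ) ≤ N := by exact_mod_cast hN
      linarith
    have h := telescope_step_3dvar hδ hk
    have h' : ((N:ℝ) + m + 1) ^ (-(1+δ)) ≤
        δ⁻¹ * (((N:ℝ)+m) ^ (-δ) - ((N:ℝ)+m+1) ^ (-δ)) := by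
      have := mul_le_mul_of_nonneg_left h (inv_nonneg.mpr hδ0.le)
      rwa [← mul_assoc, inv_mul_cancel₀ hδ0.ne', one_mul] at this
    convert h' using 4
    push_cast; ring
  calc ∑ m ∈ Finset.range M, ((N:ℝ) + m + 1) ^ (-(1+δ))
      ≤ ∑ m ∈ Finset.range M, δ⁻¹ * (((N:ℝ) + m) ^ (-δ) - ((N:ℝ) + (m+1:ℕ)) ^ (-δ)) :=
        Finset.sum_le_sum hstep
    _ = δ⁻¹ * ∑ m ∈ Finset.range M, ((fun i : ℕ => ((N:ℝ) + i) ^ (-δ)) m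
          - (fun i : ℕ => ((N:ℝ) + i) ^ (-δ)) (m+1)) := by
        rw [Finset.mul_sum]
    _ = δ⁻¹ * (((N:ℝ) + (0:ℕ)) ^ (-δ) - ((N:ℝ) + M) ^ (-δ)) := by
        rw [Finset.sum_range_sub' (fun i : ℕ => ((N:ℝ) + i) ^ (-δ)) M]
    _ ≤ δ⁻¹ * (N:ℝ) ^ (-δ) := by
        have h4 : (0:ℝ) ≤ ((N:ℝ) + M) ^ (-δ) := Real.rpow_nonneg (by positivity) _
        have h0 : ((N:ℝ) + ((0:ℕ):ℝ)) = (N:ℝ) := by push_cast; ring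
        rw [h0]
        exact mul_le_mul_of_nonneg_left (sub_le_self ((N:ℝ) ^ (-δ)) h4) (inv_nonneg.mpr hδ0.le)

private lemma head_term_bound {α : ℝ} (hα : 0 < α) (j : ℕ) {r q p : ℝ}
    (hq : q = 2 * r - 2 * p) {m : ℝ} (hm0 : 0 < m) :
    (1/α^2) * m ^ (-q) / (1 + (1/α) * m ^ (-r)) ^ (2*j+2) ≤ m ^ (2*p) / ((j:ℝ)+1)^2 := by
  have h1α : 0 < 1/α := by positivity
  set x : ℝ := (1/α) * m ^ (-r) with hx_def
  have hx0 : 0 < x := mul_pos h1α (Real.rpow_pos_of_pos hm0 _)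
  have hjp : (0:ℝ) < (j:ℝ)+1 := by positivity
  have hb : 1 + ((j:ℝ)+1) * x ≤ (1+x) ^ (j+1) := by
    have h := one_add_mul_le_pow (a := x) (by linarith) (j+1)
    push_cast at h
    convert h using 2
  have hpow : (((j:ℝ)+1) * x)^2 ≤ (1 + x) ^ (2*j+2) := by
    calc (((j:ℝ)+1) * x)^2 ≤ ((1+x)^(j+1))^2 := by
          apply pow_le_pow_left₀ (by positivity)
          nlinarith
      _ = (1+x)^(2*j+2) := by rw [← pow_mul]; congr 1; ring
  have hnum : 0 ≤ (1/α^2) * m ^ (-q) := by positivity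
  calc (1/α^2) * m ^ (-q) / (1 + x) ^ (2*j+2)
      ≤ (1/α^2) * m ^ (-q) / (((j:ℝ)+1) * x)^2 :=
        div_le_div_of_nonneg_left hnum (by positivity) hpow
    _ = m ^ (2*p) / ((j:ℝ)+1)^2 := by
        rw [hx_def]
        have hmr : ((m ^ (-r)) : ℝ)^2 = m ^ (-r*2) := by
          rw [← Real.rpow_natCast (m ^ (-r)) 2, ← Real.rpow_mul hm0.le]
          norm_num
        have hsplit : m ^ (-q) = m ^ (2*p) * m ^ (-r*2) := by
          rw [← Real.rpow_add hm0]; congr 1; rw [hq]; ring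
        rw [mul_pow, mul_pow, hmr, hsplit]
        have hmr0 : m ^ (-r*2) ≠ 0 := (Real.rpow_pos_of_pos hm0 _).ne'
        field_simp

set_option maxHeartbeats 1000000 in
/-- Series estimate for the 3DVAR variance under power-law eigenvalue decay:
with `r = 1 + 2ε + 2p`, there is `C` such that for all `α > 0` and `j ≥ 0`,
`∑_{i=1}^∞ α⁻² i^{-2-4ε-2p}/(1 + α⁻¹ i^{-r})^{2j+2} ≤
  C (1/(j+1))^{1+2ε/r} α^{-(1+2p)/r}`. -/
theorem threeDVAR_variance_series_estimate (ε p : ℝ) (hε : 0 < ε) (hp : 0 < p) :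
    ∃ C : ℝ, 0 < C ∧ ∀ α : ℝ, 0 < α → ∀ j : ℕ,
      (∑' i : ℕ+, (1 / α ^ 2) * (i : ℝ) ^ (-2 - 4 * ε - 2 * p) /
          (1 + (1 / α) * (i : ℝ) ^ (-(1 + 2 * ε + 2 * p))) ^ (2 * j + 2)) ≤
        C * (1 / ((j : ℝ) + 1)) ^ (1 + 2 * ε / (1 + 2 * ε + 2 * p)) *
          α ^ (-(1 + 2 * p) / (1 + 2 * ε + 2 * p)) := by
  set r : ℝ := 1 + 2 * ε + 2 * p with hr_def
  set q : ℝ := 2 + 4 * ε + 2 * p with hq_def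
  set δ : ℝ := 1 + 4 * ε + 2 * p with hδ_def
  have hr0 : 0 < r := by rw [hr_def]; linarith
  have hδ1 : 1 ≤ δ := by rw [hδ_def]; linarith
  have hδ0 : 0 < δ := by linarith
  have hq1 : 1 < q := by rw [hq_def]; linarith
  have hqδ : q = 1 + δ := by rw [hq_def, hδ_def]; ring
  have hq2r : q = 2 * r - 2 * p := by rw [hq_def, hr_def]; ring
  set s : ℝ := 1 + 2 * ε / r with hs_def
  set t : ℝ := (1 + 2 * p) / r with ht_def
  have hst : s + t = 2 := by rw [hs_def, ht_def]; field_simp; ring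
  have hs0 : 0 < s := by rw [hs_def]; positivity
  have ht0 : 0 < t := by positivity
  have hδr : (1/r) * (-δ) = -s := by
    rw [hδ_def, hs_def, hr_def]; field_simp; ring
  have htr : (1/r) * (1 + 2*p) = t := by rw [ht_def]; field_simp
  have hGsum : Summable (fun n : ℕ => ((n:ℝ) + 1) ^ (-q)) := by
    have h1 : Summable (fun n : ℕ => (n:ℝ) ^ (-q)) :=
      Real.summable_nat_rpow.mpr (by linarith)
    have h2 := (summable_nat_add_iff 1).mpr h1
    convert h2 using 2 with n
    · rfl
    push_cast
    ring
  set Z : ℝ := ∑' n : ℕ, ((n:ℝ) + 1) ^ (-q) with hZ_def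
  have hZ0 : 0 ≤ Z := tsum_nonneg fun n => Real.rpow_nonneg (by positivity) _
  have h2p0 : (0:ℝ) < 2 ^ (1 + 2 * p) := Real.rpow_pos_of_pos (by norm_num) _
  refine ⟨Z + 2 ^ (1 + 2 * p) + δ⁻¹, by positivity, ?_⟩
  intro α hα j
  have hjp : (0:ℝ) < (j:ℝ) + 1 := by positivity
  have h1α : (0:ℝ) < 1/α := by positivity
  have hexp : (-2 - 4 * ε - 2 * p : ℝ) = -q := by rw [hq_def]; ring
  set F : ℕ → ℝ := fun n =>
    (1/α^2) * ((n:ℝ)+1) ^ (-q) / (1 + (1/α) * ((n:ℝ)+1) ^ (-r)) ^ (2*j+2) with hF_def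
  have hidx : (∑' i : ℕ+, (1 / α ^ 2) * (i : ℝ) ^ (-2 - 4 * ε - 2 * p) /
      (1 + (1 / α) * (i : ℝ) ^ (-r)) ^ (2 * j + 2)) = ∑' n : ℕ, F n := by
    rw [← Equiv.pnatEquivNat.symm.tsum_eq (fun i : ℕ+ => (1 / α ^ 2) * (i : ℝ) ^ (-2 - 4 * ε - 2 * p) /
      (1 + (1 / α) * (i : ℝ) ^ (-r)) ^ (2 * j + 2))]
    apply tsum_congr
    intro n
    have hcoe : ((Equiv.pnatEquivNat.symm n : ℕ+) : ℝ) = (n:ℝ) + 1 := by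
      simp [Equiv.pnatEquivNat]
    simp only [hcoe, hexp, hF_def]
  rw [hidx, show -(1+2*p)/r = -t from by rw [ht_def]; ring,
    show (1 / ((j:ℝ) + 1)) ^ s = ((j:ℝ) + 1) ^ (-s) from by
      rw [one_div, Real.inv_rpow (by positivity), ← Real.rpow_neg (by positivity)]]
  -- basic facts about F
  have hm : ∀ n : ℕ, (0:ℝ) < (n:ℝ) + 1 := fun n => by positivity
  have hxpos : ∀ n : ℕ, 0 < (1/α) * ((n:ℝ)+1) ^ (-r) :=
    fun n => mul_pos h1α (Real.rpow_pos_of_pos (hm n) _)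
  have hF0 : ∀ n, 0 ≤ F n := fun n =>
    div_nonneg (mul_nonneg (by positivity) (Real.rpow_nonneg (hm n).le _))
      (pow_nonneg (by nlinarith [hxpos n]) _)
  have hFle : ∀ n, F n ≤ (1/α^2) * ((n:ℝ)+1) ^ (-q) := fun n =>
    div_le_self (mul_nonneg (by positivity) (Real.rpow_nonneg (hm n).le _))
      (one_le_pow₀ (by nlinarith [hxpos n]))
  have hMaj : Summable (fun n : ℕ => (1/α^2) * ((n:ℝ)+1) ^ (-q)) := hGsum.mul_left _
  have hFsum : Summable F := Summable.of_nonneg_of_le hF0 hFle hMaj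
  have hGnn : (0:ℝ) ≤ ((j:ℝ)+1) ^ (-s) * α ^ (-t) :=
    mul_nonneg (Real.rpow_nonneg hjp.le _) (Real.rpow_nonneg hα.le _)
  by_cases hc : (j:ℝ) + 1 ≤ α
  · -- easy case : α large
    have key : 1/α^2 ≤ ((j:ℝ)+1) ^ (-s) * α ^ (-t) := by
      have e1 : (1:ℝ)/α^2 = α ^ (-s) * α ^ (-t) := by
        rw [← Real.rpow_add hα, show -s + -t = -(2:ℝ) by linarith,
          Real.rpow_neg hα.le, one_div]
        congr 1
        rw [← Real.rpow_natCast α 2]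
        norm_num
      rw [e1]
      apply mul_le_mul_of_nonneg_right _ (Real.rpow_nonneg hα.le _)
      exact Real.rpow_le_rpow_of_nonpos hjp hc (by linarith)
    calc ∑' n, F n ≤ ∑' n : ℕ, (1/α^2) * ((n:ℝ)+1) ^ (-q) := Summable.tsum_le_tsum hFle hFsum hMaj
      _ = (1/α^2) * Z := tsum_mul_left
      _ ≤ (((j:ℝ)+1) ^ (-s) * α ^ (-t)) * Z := mul_le_mul_of_nonneg_right key hZ0
      _ = Z * (((j:ℝ)+1) ^ (-s) * α ^ (-t)) := by ring
      _ ≤ (Z + 2 ^ (1+2*p) + δ⁻¹) * (((j:ℝ)+1) ^ (-s) * α ^ (-t)) := by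
          apply mul_le_mul_of_nonneg_right _ hGnn
          have : (0:ℝ) ≤ δ⁻¹ := by positivity
          linarith
      _ = (Z + 2 ^ (1+2*p) + δ⁻¹) * ((j:ℝ)+1) ^ (-s) * α ^ (-t) := by ring
  · -- main case : α < j + 1
    push_neg at hc
    set X : ℝ := ((j:ℝ)+1)/α with hX_def
    have hX1 : 1 < X := (one_lt_div hα).mpr hc
    have hX0 : 0 < X := by linarith
    set T : ℝ := X ^ (1/r) with hT_def
    have hT1 : 1 < T := by
      rw [hT_def]
      exact (one_lt_rpow_iff_of_pos hX0).mpr (Or.inl ⟨hX1, by positivity⟩)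
    have hT0 : (0:ℝ) < T := by linarith
    set N : ℕ := ⌈T⌉₊ with hN_def
    have hN1 : 1 ≤ N := Nat.one_le_ceil_iff.mpr hT0
    have hTN : T ≤ (N:ℝ) := Nat.le_ceil T
    have hN2T : (N:ℝ) ≤ 2 * T := le_of_lt (lt_of_lt_of_le (Nat.ceil_lt_add_one hT0.le) (by linarith))
    have hN0 : (0:ℝ) < (N:ℝ) := by
      have : (1:ℝ) ≤ (N:ℝ) := by exact_mod_cast hN1
      linarith
    -- identities for T powers
    have hTup : T ^ (1+2*p) = ((j:ℝ)+1) ^ t * α ^ (-t) := by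
      rw [hT_def, ← Real.rpow_mul hX0.le, htr, hX_def, Real.div_rpow hjp.le hα.le,
        Real.rpow_neg hα.le, div_eq_mul_inv]
    have hTdown : T ^ (-δ) = ((j:ℝ)+1) ^ (-s) * α ^ s := by
      rw [hT_def, ← Real.rpow_mul hX0.le, hδr, hX_def, Real.div_rpow hjp.le hα.le,
        Real.rpow_neg hα.le s, div_eq_mul_inv, inv_inv]
    -- split the sum
    rw [← Summable.sum_add_tsum_nat_add N hFsum]
    have hhead : ∑ n ∈ Finset.range N, F n ≤ 2 ^ (1+2*p) * (((j:ℝ)+1) ^ (-s) * α ^ (-t)) := by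
      have hterm : ∀ n ∈ Finset.range N, F n ≤ (N:ℝ) ^ (2*p) / ((j:ℝ)+1)^2 := by
        intro n hn
        have hmN : ((n:ℝ)+1) ≤ (N:ℝ) := by
          have := Finset.mem_range.mp hn
          exact_mod_cast Nat.succ_le_of_lt this
        calc F n ≤ ((n:ℝ)+1) ^ (2*p) / ((j:ℝ)+1)^2 := head_term_bound hα j hq2r (hm n)
          _ ≤ (N:ℝ) ^ (2*p) / ((j:ℝ)+1)^2 := by
              gcongr
      calc ∑ n ∈ Finset.range N, F n ≤ (Finset.range N).card • ((N:ℝ) ^ (2*p) / ((j:ℝ)+1)^2) :=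
            Finset.sum_le_card_nsmul _ _ _ hterm
        _ = (N:ℝ) * ((N:ℝ) ^ (2*p) / ((j:ℝ)+1)^2) := by
            rw [Finset.card_range, nsmul_eq_mul]
        _ = (N:ℝ) ^ (1+2*p) / ((j:ℝ)+1)^2 := by
            rw [Real.rpow_add hN0, Real.rpow_one]; ring
        _ ≤ (2*T) ^ (1+2*p) / ((j:ℝ)+1)^2 := by
            gcongr
        _ = 2 ^ (1+2*p) * (((j:ℝ)+1) ^ (-s) * α ^ (-t)) := by
            rw [Real.mul_rpow (by norm_num) hT0.le, hTup]
            have hjj : ((j:ℝ)+1) ^ t / ((j:ℝ)+1)^2 = ((j:ℝ)+1) ^ (-s) := by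
              rw [show (((j:ℝ)+1)^2 : ℝ) = ((j:ℝ)+1) ^ ((2:ℝ)) from by
                    rw [← Real.rpow_natCast ((j:ℝ)+1) 2]; norm_num,
                ← Real.rpow_sub hjp]
              congr 1; linarith
            calc 2 ^ (1+2*p) * (((j:ℝ)+1) ^ t * α ^ (-t)) / ((j:ℝ)+1)^2
                = 2 ^ (1+2*p) * ((((j:ℝ)+1) ^ t / ((j:ℝ)+1)^2) * α ^ (-t)) := by ring
              _ = 2 ^ (1+2*p) * (((j:ℝ)+1) ^ (-s) * α ^ (-t)) := by rw [hjj]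
    have htail : ∑' i : ℕ, F (i + N) ≤ δ⁻¹ * (((j:ℝ)+1) ^ (-s) * α ^ (-t)) := by
      have hshift : Summable (fun i : ℕ => F (i + N)) := (summable_nat_add_iff N).mpr hFsum
      have hmaj2 : Summable (fun i : ℕ => (1/α^2) * ((N:ℝ) + i + 1) ^ (-(1+δ))) := by
        apply Summable.mul_left
        have h2 := (summable_nat_add_iff N).mpr hGsum
        convert h2 using 2 with i
        · rfl
        rw [← hqδ]
        push_cast
        ring_nf
      have hle2 : ∀ i : ℕ, F (i + N) ≤ (1/α^2) * ((N:ℝ) + i + 1) ^ (-(1+δ)) := by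
        intro i
        have h := hFle (i + N)
        have he : ((N:ℝ) + i + 1) ^ (-(1+δ)) = (((i+N:ℕ):ℝ)+1) ^ (-q) := by
          rw [← hqδ]
          push_cast
          ring_nf
        rw [he]
        exact h
      calc ∑' i : ℕ, F (i+N) ≤ ∑' i : ℕ, (1/α^2) * ((N:ℝ) + i + 1) ^ (-(1+δ)) :=
            Summable.tsum_le_tsum hle2 hshift hmaj2
        _ = (1/α^2) * ∑' i : ℕ, ((N:ℝ) + i + 1) ^ (-(1+δ)) := tsum_mul_left
        _ ≤ (1/α^2) * (δ⁻¹ * (N:ℝ) ^ (-δ)) := by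
            apply mul_le_mul_of_nonneg_left (tail_sum_bound_3dvar hδ1 hN1) (by positivity)
        _ ≤ (1/α^2) * (δ⁻¹ * T ^ (-δ)) := by
            apply mul_le_mul_of_nonneg_left _ (by positivity)
            apply mul_le_mul_of_nonneg_left _ (by positivity)
            exact Real.rpow_le_rpow_of_nonpos hT0 hTN (by linarith)
        _ = δ⁻¹ * (((j:ℝ)+1) ^ (-s) * α ^ (-t)) := by
            rw [hTdown]
            have hαs : (1/α^2) * α ^ s = α ^ (-t) := by
              rw [show (1:ℝ)/α^2 = α ^ (-(2:ℝ)) from by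
                    rw [Real.rpow_neg hα.le, one_div]
                    congr 1
                    rw [← Real.rpow_natCast α 2]; norm_num,
                ← Real.rpow_add hα]
              congr 1; linarith
            calc (1/α^2) * (δ⁻¹ * (((j:ℝ)+1) ^ (-s) * α ^ s))
                = δ⁻¹ * (((j:ℝ)+1) ^ (-s) * ((1/α^2) * α ^ s)) := by ring
              _ = δ⁻¹ * (((j:ℝ)+1) ^ (-s) * α ^ (-t)) := by rw [hαs]
    calc ∑ n ∈ Finset.range N, F n + ∑' i : ℕ, F (i + N)
        ≤ 2 ^ (1+2*p) * (((j:ℝ)+1) ^ (-s) * α ^ (-t)) + δ⁻¹ * (((j:ℝ)+1) ^ (-s) * α ^ (-t)) :=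
          add_le_add hhead htail
      _ = (2 ^ (1+2*p) + δ⁻¹) * (((j:ℝ)+1) ^ (-s) * α ^ (-t)) := by ring
      _ ≤ (Z + 2 ^ (1+2*p) + δ⁻¹) * (((j:ℝ)+1) ^ (-s) * α ^ (-t)) := by
          apply mul_le_mul_of_nonneg_right _ hGnn
          linarith
      _ = (Z + 2 ^ (1+2*p) + δ⁻¹) * ((j:ℝ)+1) ^ (-s) * α ^ (-t) := by ring
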